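/- Let $(Q_4, \cdot)$ be the order-4 quandle of Table 1, let $\rhd_1$ be the construction-1 operation on $Q_4 \times \mathbb{Z}_3$ and let $\rhd_2$ be the construction-2 operation on $Q_4 \times \mathbb{Z}_3$. Then $(Q_4 \times \mathbb{Z}_3, \rhd_1)$ and $(Q_4 \times \mathbb{Z}_3, \rhd_2)$ are non-isomorphic: there is no bijection $f : Q_4 \times \mathbb{Z}_3 \to Q_4 \times \mathbb{Z}_3$ such that $f(X \rhd_1 Y) = f(X) \rhd_2 f(Y)$ for all $X, Y$. -/
import Mathlib

/-- The construction-1 operation on `Q × ZMod 3`. -/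
def op1 {Q : Type*} (star : Q → Q → Q) (X Y : Q × ZMod 3) : Q × ZMod 3 :=
  if (X.2 = 1 ∧ Y.2 = 1) ∨ (X.2 = 0 ∧ Y.2 = 1) then (star X.1 Y.1, X.2 + Y.2 + 2)
  else if (X.2 = 2 ∧ Y.2 = 2) ∨ (X.2 = 2 ∧ Y.2 = 1) then (star X.1 Y.1, X.2)
  else (star X.1 Y.1, X.2 + Y.2)

/-- The construction-2 operation on `Q × ZMod 3`. -/
def op2 {Q : Type*} (star : Q → Q → Q) (X Y : Q × ZMod 3) : Q × ZMod 3 :=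
  if (X.2 = 1 ∧ Y.2 = 1) ∨ (X.2 = 0 ∧ Y.2 = 1) ∨ (X.2 = 2 ∧ Y.2 = 1) then
    (star X.1 Y.1, X.2 + Y.2 + 2)
  else if (X.2 = 0 ∧ Y.2 = 2) ∨ (X.2 = 1 ∧ Y.2 = 2) then (star X.1 Y.1, X.2 + Y.2 + 1)
  else (star X.1 Y.1, X.2 + Y.2)

/-- The order-4 quandle of Table 1 (elements 1,2,3,4 encoded as 0,1,2,3). -/
def q4 : Fin 4 → Fin 4 → Fin 4 :=
  ![![0, 0, 1, 1], ![1, 1, 0, 0], ![3, 3, 2, 2], ![2, 2, 3, 3]]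

lemma op1_idem : ∀ X : Fin 4 × ZMod 3, op1 q4 X X = X := by decide

lemma op2_not_idem : op2 q4 ((0 : Fin 4), (2 : ZMod 3)) ((0 : Fin 4), (2 : ZMod 3))
    ≠ ((0 : Fin 4), (2 : ZMod 3)) := by decide

theorem construction1_not_iso_construction2 :
    ¬ ∃ f : Fin 4 × ZMod 3 → Fin 4 × ZMod 3,
        Function.Bijective f ∧ ∀ X Y, f (op1 q4 X Y) = op2 q4 (f X) (f Y) := by
  rintro ⟨f, ⟨-, hsurj⟩, hf⟩
  obtain ⟨X, hX⟩ := hsurj ((0 : Fin 4), (2 : ZMod 3))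
  have := hf X X
  rw [op1_idem X, hX] at this
  exact op2_not_idem this.symm
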